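/- arXiv:2505.12849 — 2 statements merged into one kernel-verified Lean document; each statement's English description precedes it below -/
import Mathlib

section
/- For the affine causal system x_t = σ_t(x_{<t}) · z_t + u_t(x_{<t}) with x_1 = z_1, the Jacobi iteration x_t^{(k+1)} = σ_t(x^{(k)}_{<t}) · z_t + u_t(x^{(k)}_{<t}) converges to the exact solution after at most T - 1 iterations, i.e., x^{(T-1)} equals the unique solution x^* of the system, for any initial guess x^{(0)} with x^{(0)} 0 = z 0. -/
/-- For the affine causal system `x t = σ t (x) * z t + u t (x)` with
`σ 0 = 1`, `u 0 = 0`, the Jacobi iteration converges to the exact solution after at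
most `T - 1` iterations, for any initial guess whose first coordinate equals `z 0`. -/
theorem jacobi_affine_causal_converges
    (T : ℕ) (hT : 0 < T) (z : Fin T → ℝ)
    (σ u : Fin T → (Fin T → ℝ) → ℝ)
    (hσ : ∀ t : Fin T, ∀ x y : Fin T → ℝ, (∀ i : Fin T, i < t → x i = y i) → σ t x = σ t y)
    (hu : ∀ t : Fin T, ∀ x y : Fin T → ℝ, (∀ i : Fin T, i < t → x i = y i) → u t x = u t y)
    (hσ0 : ∀ x : Fin T → ℝ, σ ⟨0, hT⟩ x = 1)
    (hu0 : ∀ x : Fin T → ℝ, u ⟨0, hT⟩ x = 0)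
    (xs : Fin T → ℝ) (hxs : ∀ t : Fin T, xs t = σ t xs * z t + u t xs)
    (hxsuniq : ∀ y : Fin T → ℝ, (∀ t : Fin T, y t = σ t y * z t + u t y) → y = xs)
    (x : ℕ → Fin T → ℝ)
    (hx0 : x 0 ⟨0, hT⟩ = z ⟨0, hT⟩)
    (hx : ∀ k : ℕ, ∀ t : Fin T, x (k + 1) t = σ t (x k) * z t + u t (x k)) :
    x (T - 1) = xs := by
  have key : ∀ k : ℕ, ∀ t : Fin T, t.val ≤ k → x k t = xs t := by
    intro k
    induction k with
    | zero =>
      intro t ht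
      have ht0 : t = ⟨0, hT⟩ := by
        ext
        simpa using ht
      subst ht0
      rw [hx0, hxs ⟨0, hT⟩, hσ0, hu0]
      ring
    | succ k ih =>
      intro t ht
      rw [hx k t, hxs t]
      have hagree : ∀ i : Fin T, i < t → x k i = xs i := by
        intro i hi
        exact ih i (Nat.le_of_lt_succ (lt_of_lt_of_le hi ht))
      rw [hσ t (x k) xs hagree, hu t (x k) xs hagree]
  funext t
  exact key (T - 1) t (Nat.le_sub_one_of_lt t.isLt)
end

section
/- Consider the block Gauss–Seidel–Jacobi scheme: partition Fin T into consecutive index intervals 𝒢_1 < 𝒢_2 < … < 𝒢_G, and solve the strictly causal fixed-point system x = g(x) by solving each block in turn, running the Jacobi iteration within block g for |𝒢_g| iterations while keeping the previously solved blocks fixed at their exact values. Then the scheme produces the exact solution x^* of the full system after running all G blocks. -/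
/-- The block Gauss–Seidel–Jacobi scheme over a consecutive partition
of `Fin T` with block boundaries `b 0 = 0 ≤ b 1 ≤ … ≤ b G = T`, running the Jacobi
iteration within block `m` for `b (m+1) - b m` iterations (updating only indices in
`[b m, b (m+1))` and carrying the result to the next block), produces the exact
fixed point `xs` of the strictly causal system after running all `G` blocks. -/
theorem block_gauss_seidel_jacobi_exact
    (T G : ℕ)
    (g : (Fin T → ℝ) → (Fin T → ℝ))
    (hcausal : ∀ x y : Fin T → ℝ, ∀ t : Fin T,
      (∀ i : Fin T, i < t → x i = y i) → g x t = g y t)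
    (xs : Fin T → ℝ) (hxs : g xs = xs)
    (b : ℕ → ℕ) (hb0 : b 0 = 0) (hbmono : Monotone b) (hbG : b G = T)
    (y : ℕ → ℕ → Fin T → ℝ)
    (hstep : ∀ m k : ℕ, ∀ t : Fin T,
      y m (k + 1) t = if b m ≤ (t : ℕ) ∧ (t : ℕ) < b (m + 1) then g (y m k) t else y m k t)
    (hcarry : ∀ m : ℕ, y (m + 1) 0 = y m (b (m + 1) - b m)) :
    y G 0 = xs := by
  have main : ∀ m : ℕ, ∀ t : Fin T, (t : ℕ) < b m → y m 0 t = xs t := by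
    intro m
    induction m with
    | zero => intro t ht; rw [hb0] at ht; omega
    | succ m ih =>
      -- inner induction within block m
      have inner : ∀ k : ℕ, ∀ t : Fin T,
          (t : ℕ) < b m + k → (t : ℕ) < b (m + 1) → y m k t = xs t := by
        intro k
        induction k with
        | zero => intro t ht _; exact ih t (by omega)
        | succ k ihk =>
          intro t ht ht'
          by_cases hbm : b m ≤ (t : ℕ)
          · rw [hstep m k t, if_pos ⟨hbm, ht'⟩]
            have : g (y m k) t = g xs t := by
              apply hcausal
              intro i hi
              have hi' : (i : ℕ) < (t : ℕ) := hi
              exact ihk i (by omega) (by omega)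
            rw [this, hxs]
          · rw [hstep m k t, if_neg (by tauto)]
            exact ihk t (by omega) ht'
      intro t ht
      rw [hcarry m]
      exact inner (b (m + 1) - b m) t
        (by have := hbmono (Nat.le_succ m); omega) ht
  funext t
  exact main G t (by rw [hbG]; exact t.isLt)
end
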